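/- arXiv:1110.4921 — 3 statements merged into one kernel-verified Lean document; each statement's English description precedes it below -/
import Mathlib

section
/- Let G be a residually finite group and let A be a finite set. If X ⊆ A^G is a strongly irreducible subshift of finite type that contains at least one periodic configuration, then the set of periodic configurations in X is dense in X. -/
/-- The shift action of a group `G` on configurations `x : G → A`:
`(g • x)(h) = x(g⁻¹h)`. -/
def shift {G A : Type*} [Group G] (g : G) (x : G → A) : G → A :=
  fun h => x (g⁻¹ * h)

/-- A subshift is a closed, shift-invariant subset of `A^G` (with the prodiscrete topology). -/
def IsSubshift {G A : Type*} [Group G] [TopologicalSpace A] (X : Set (G → A)) : Prop :=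
  IsClosed X ∧ ∀ (g : G) (x : G → A), x ∈ X → shift g x ∈ X

/-- A configuration is periodic if its orbit under the shift action is finite. -/
def IsPeriodicConfig {G A : Type*} [Group G] (x : G → A) : Prop :=
  (Set.range fun g : G => shift g x).Finite

/-- A subshift is of finite type if it is defined by a finite window `Ω` and a set of
allowed patterns `P ⊆ A^Ω`. -/
def IsOfFiniteType {G A : Type*} [Group G] (X : Set (G → A)) : Prop :=
  ∃ (Ω : Finset G) (P : Set ({g : G // g ∈ Ω} → A)),
    X = {x : G → A | ∀ g : G, (fun w : {g : G // g ∈ Ω} => shift g x w.1) ∈ P}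

/-- A subshift is strongly irreducible if there is a finite `Δ ⊆ G` such that any two
patterns of configurations of `X` with supports `Ω₁, Ω₂` satisfying `Ω₁Δ⁻¹ ∩ Ω₂ = ∅`
can be glued inside `X`. -/
def IsStronglyIrreducible {G A : Type*} [Group G] (X : Set (G → A)) : Prop :=
  ∃ Δ : Finset G, ∀ Ω₁ Ω₂ : Finset G,
    (∀ a ∈ Ω₁, ∀ d ∈ Δ, a * d⁻¹ ∉ Ω₂) →
    ∀ x₁ ∈ X, ∀ x₂ ∈ X, ∃ x ∈ X,
      (∀ w ∈ Ω₁, x w = x₁ w) ∧ (∀ w ∈ Ω₂, x w = x₂ w)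

/-- A group is residually finite if the intersection of its finite-index subgroups is
trivial, i.e. every nontrivial element avoids some finite-index subgroup. -/
def ResiduallyFinite (H : Type*) [Group H] : Prop :=
  ∀ h : H, h ≠ 1 → ∃ K : Subgroup H, K.FiniteIndex ∧ h ∉ K

section aux
variable {G A : Type*} [Group G]

lemma shift_one (x : G → A) : shift (1:G) x = x := by
  funext h; simp [shift]

lemma shift_mul (g h : G) (x : G → A) : shift (g*h) x = shift g (shift h x) := by
  funext k; simp [shift, mul_assoc]

def stabCfg (x : G → A) : Subgroup G where
  carrier := {g | shift g x = x}
  one_mem' := shift_one x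
  mul_mem' := by
    intro a b ha hb
    simp only [Set.mem_setOf_eq] at *
    rw [shift_mul, hb, ha]
  inv_mem' := by
    intro a ha
    simp only [Set.mem_setOf_eq] at *
    conv_lhs => rw [← ha]
    rw [← shift_mul, inv_mul_cancel, shift_one]

lemma mem_stabCfg {x : G → A} {g : G} : g ∈ stabCfg x ↔ shift g x = x := Iff.rfl

lemma shift_eq_of_rel {x : G → A} {K : Subgroup G} (hK : K ≤ stabCfg x)
    {a b : G} (h : a⁻¹ * b ∈ K) : shift a x = shift b x := by
  have hx : shift (a⁻¹ * b) x = x := hK h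
  calc shift a x = shift a (shift (a⁻¹*b) x) := by rw [hx]
    _ = shift (a * (a⁻¹ * b)) x := (shift_mul _ _ _).symm
    _ = shift b x := by rw [mul_inv_cancel_left]

lemma finiteIndex_stabCfg (x : G → A) (h : IsPeriodicConfig x) :
    (stabCfg x).FiniteIndex := by
  haveI : Finite (Set.range fun g : G => shift g x) := h.to_subtype
  have hfin : Finite (G ⧸ stabCfg x) := by
    let f : G ⧸ stabCfg x → (Set.range fun g : G => shift g x) := fun q =>
      Quotient.liftOn' q (fun g => ⟨shift g x, ⟨g, rfl⟩⟩) (by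
        intro a b hab
        have : a⁻¹ * b ∈ stabCfg x := QuotientGroup.leftRel_apply.1 hab
        exact Subtype.ext (shift_eq_of_rel le_rfl this))
    have hinj : Function.Injective f := by
      intro q q'
      induction q using Quotient.inductionOn'
      induction q' using Quotient.inductionOn'
      rename_i a b
      intro hab
      have h1 : shift a x = shift b x := congrArg Subtype.val hab
      refine Quotient.sound' (QuotientGroup.leftRel_apply.2 ?_)
      show shift (a⁻¹ * b) x = x
      rw [shift_mul, ← h1, ← shift_mul, inv_mul_cancel, shift_one]
    exact Finite.of_injective f hinj
  exact Subgroup.finiteIndex_of_finite_quotient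

lemma periodic_of_invariant {x : G → A} (K : Subgroup G) (hK : K.FiniteIndex)
    (h : ∀ k ∈ K, shift k x = x) : IsPeriodicConfig x := by
  haveI := hK
  haveI : Finite (G ⧸ K) := Subgroup.finite_quotient_of_finiteIndex (H := K)
  have hle : K ≤ stabCfg x := fun k hk => h k hk
  let f : G ⧸ K → (G → A) := fun q =>
    Quotient.liftOn' q (fun g => shift g x) (by
      intro a b hab
      exact shift_eq_of_rel hle (QuotientGroup.leftRel_apply.1 hab))
  have : (Set.range fun g : G => shift g x) ⊆ Set.range f := by
    rintro _ ⟨g, rfl⟩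
    exact ⟨Quotient.mk'' g, rfl⟩
  exact (Set.finite_range f).subset this

lemma isClosed_agree {A : Type*} [TopologicalSpace A] [DiscreteTopology A]
    (s : Set G) (f : G → A) : IsClosed {z : G → A | ∀ g ∈ s, z g = f g} := by
  have : {z : G → A | ∀ g ∈ s, z g = f g} = ⋂ g ∈ s, (fun z : G → A => z g) ⁻¹' {f g} := by
    ext z; simp
  rw [this]
  exact isClosed_biInter fun g _ => (isClosed_singleton).preimage (continuous_apply g)

end aux

open Pointwise in
lemma exists_periodic_agree {G A : Type*} [Group G] [Finite A] [TopologicalSpace A]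
    [DiscreteTopology A]
    (hG : ResiduallyFinite G) (X : Set (G → A))
    (hX : IsSubshift X) (hft : IsOfFiniteType X) (hsi : IsStronglyIrreducible X)
    (hper : ∃ x ∈ X, IsPeriodicConfig x)
    (x : G → A) (hx : x ∈ X) (Ω : Finset G) :
    ∃ y ∈ X, IsPeriodicConfig y ∧ ∀ g ∈ Ω, y g = x g := by
  classical
  obtain ⟨x₀, hx₀X, hx₀per⟩ := hper
  obtain ⟨Δ, hΔ⟩ := hsi
  obtain ⟨W, P, hP⟩ := hft
  set E : Finset G := Ω ∪ Ω * Δ⁻¹ with hE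
  have hΩE : (Ω : Set G) ⊆ (E : Set G) := by
    intro g hg; exact Finset.mem_union_left _ hg
  -- Step 1: compactness to get z ∈ X with z|Ω = x|Ω and z = x₀ off E.
  have hzC : ∀ F : Finset G, ∃ z, z ∈ X ∧ (∀ g ∈ Ω, z g = x g) ∧
      (∀ g ∈ F, g ∉ E → z g = x₀ g) := by
    intro F
    have hdisj : ∀ a ∈ Ω, ∀ d ∈ Δ, a * d⁻¹ ∉ F.filter (· ∉ E) := by
      intro a ha d hd hmem
      have h1 : a * d⁻¹ ∈ E := Finset.mem_union_right _
        (Finset.mul_mem_mul ha (Finset.inv_mem_inv hd))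
      exact (Finset.mem_filter.1 hmem).2 h1
    obtain ⟨z, hzX, h1, h2⟩ := hΔ Ω (F.filter (· ∉ E)) hdisj x hx x₀ hx₀X
    exact ⟨z, hzX, h1, fun g hg hgE => h2 g (Finset.mem_filter.2 ⟨hg, hgE⟩)⟩
  have hcomp : ∃ z, z ∈ X ∧ (∀ g ∈ Ω, z g = x g) ∧ ∀ g, g ∉ E → z g = x₀ g := by
    set C : Finset G → Set (G → A) := fun F =>
      X ∩ {z | ∀ g ∈ (Ω : Set G), z g = x g} ∩
        {z | ∀ g ∈ {g : G | g ∈ F ∧ g ∉ E}, z g = x₀ g} with hC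
    have hCcl : ∀ F, IsClosed (C F) :=
      fun F => ((hX.1.inter (isClosed_agree _ x)).inter (isClosed_agree _ x₀))
    have hCne : ∀ F, (C F).Nonempty := by
      intro F
      obtain ⟨z, h1, h2, h3⟩ := hzC F
      exact ⟨z, ⟨h1, h2⟩, fun g hg => h3 g hg.1 hg.2⟩
    have hdir : Directed (· ⊇ ·) C := by
      intro F F'
      refine ⟨F ∪ F', ?_, ?_⟩
      · rintro z ⟨⟨h1, h2⟩, h3⟩
        exact ⟨⟨h1, h2⟩, fun g hg => h3 g ⟨Finset.mem_union_left _ hg.1, hg.2⟩⟩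
      · rintro z ⟨⟨h1, h2⟩, h3⟩
        exact ⟨⟨h1, h2⟩, fun g hg => h3 g ⟨Finset.mem_union_right _ hg.1, hg.2⟩⟩
    obtain ⟨z, hz⟩ := IsCompact.nonempty_iInter_of_directed_nonempty_isCompact_isClosed
      C hdir hCne (fun F => (hCcl F).isCompact) hCcl
    have hz0 := Set.mem_iInter.1 hz
    refine ⟨z, (hz0 ∅).1.1, fun g hg => (hz0 ∅).1.2 g hg, fun g hg => ?_⟩
    exact (hz0 {g}).2 g ⟨Finset.mem_singleton_self g, hg⟩
  obtain ⟨z, hzX, hzΩ, hzout⟩ := hcomp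
  -- Step 2: choose finite-index subgroup K.
  set B : Finset G := E ∪ E * W⁻¹ with hB
  set T : Finset G := (B * B⁻¹).erase 1 with hT
  choose K hKfi hKn using fun s : {g : G // g ∈ T} => hG s.1 (Finset.ne_of_mem_erase s.2)
  set Kf : Subgroup G := stabCfg x₀ ⊓ ⨅ s : {g : G // g ∈ T}, K s with hKf
  have hKffi : Kf.FiniteIndex := by
    haveI := finiteIndex_stabCfg x₀ hx₀per
    haveI := Subgroup.finiteIndex_iInf hKfi
    infer_instance
  have hKstab : Kf ≤ stabCfg x₀ := inf_le_left
  have hsep : ∀ k ∈ Kf, k ≠ 1 → k ∉ B * B⁻¹ := by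
    intro k hk hk1 hmem
    have hkT : k ∈ T := Finset.mem_erase.2 ⟨hk1, hmem⟩
    have : k ∈ K ⟨k, hkT⟩ := by
      have h2 : k ∈ ⨅ s : {g : G // g ∈ T}, K s := (Subgroup.mem_inf.1 hk).2
      exact (Subgroup.mem_iInf).1 h2 ⟨k, hkT⟩
    exact hKn ⟨k, hkT⟩ this
  have hEB : ∀ e ∈ E, e ∈ B := fun e he => Finset.mem_union_left _ he
  have hEWB : ∀ e ∈ E, ∀ w ∈ W, e * w⁻¹ ∈ B := fun e he w hw =>
    Finset.mem_union_right _ (Finset.mul_mem_mul he (Finset.inv_mem_inv hw))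
  -- uniqueness
  have huniq : ∀ k ∈ Kf, ∀ k' ∈ Kf, ∀ g : G, k⁻¹ * g ∈ E → k'⁻¹ * g ∈ E → k = k' := by
    intro k hk k' hk' g he he'
    by_contra hne
    have h1 : k⁻¹ * k' ∈ Kf := Kf.mul_mem (Kf.inv_mem hk) hk'
    have h2 : k⁻¹ * k' ≠ 1 := by
      intro h; exact hne (by rwa [inv_mul_eq_one] at h)
    refine hsep _ h1 h2 ?_
    have : k⁻¹ * k' = (k⁻¹ * g) * (k'⁻¹ * g)⁻¹ := by group
    rw [this]
    exact Finset.mul_mem_mul (hEB _ he) (Finset.inv_mem_inv (hEB _ he'))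
  -- Define y.
  set y : G → A := fun g =>
    if h : ∃ k, k ∈ Kf ∧ k⁻¹ * g ∈ E then z (h.choose⁻¹ * g) else x₀ g with hy
  have yA : ∀ k ∈ Kf, ∀ g : G, k⁻¹ * g ∈ E → y g = z (k⁻¹ * g) := by
    intro k hk g hg
    have h : ∃ k, k ∈ Kf ∧ k⁻¹ * g ∈ E := ⟨k, hk, hg⟩
    have hc := h.choose_spec
    have : h.choose = k := huniq _ hc.1 _ hk g hc.2 hg
    simp only [hy, dif_pos h, this]
  have yB : ∀ g : G, (∀ k ∈ Kf, k⁻¹ * g ∉ E) → y g = x₀ g := by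
    intro g hg
    have h : ¬ ∃ k, k ∈ Kf ∧ k⁻¹ * g ∈ E := by
      rintro ⟨k, hk, he⟩; exact hg k hk he
    simp only [hy, dif_neg h]
  have hx₀inv : ∀ k ∈ Kf, ∀ g : G, x₀ (k⁻¹ * g) = x₀ g := by
    intro k hk g
    have h := hKstab hk
    exact congrFun h g
  have yz : ∀ k ∈ Kf, ∀ g : G, (∀ k' ∈ Kf, k' ≠ k → k'⁻¹ * g ∉ E) →
      y g = z (k⁻¹ * g) := by
    intro k hk g hother
    by_cases hc : k⁻¹ * g ∈ E
    · exact yA k hk g hc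
    · have h1 : y g = x₀ g := by
        refine yB g fun k' hk' he => ?_
        rcases eq_or_ne k' k with rfl | hne
        · exact hc he
        · exact hother k' hk' hne he
      have h2 : z (k⁻¹ * g) = x₀ (k⁻¹ * g) := hzout _ hc
      rw [h1, h2, hx₀inv k hk g]
  -- y agrees with x on Ω
  have hagree : ∀ g ∈ Ω, y g = x g := by
    intro g hg
    have h1 : (1:G)⁻¹ * g ∈ E := by
      rw [inv_one, one_mul]; exact Finset.mem_union_left _ hg
    rw [yA 1 Kf.one_mem g h1, inv_one, one_mul]
    exact hzΩ g hg
  -- y is Kf-invariant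
  have hinv : ∀ k ∈ Kf, shift k y = y := by
    intro k hk
    funext g
    show y (k⁻¹ * g) = y g
    by_cases hc : ∃ k', k' ∈ Kf ∧ k'⁻¹ * (k⁻¹ * g) ∈ E
    · obtain ⟨k', hk', he⟩ := hc
      have h1 : y (k⁻¹ * g) = z (k'⁻¹ * (k⁻¹ * g)) := yA k' hk' _ he
      have hkk' : k * k' ∈ Kf := Kf.mul_mem hk hk'
      have he2 : (k * k')⁻¹ * g ∈ E := by
        rwa [mul_inv_rev, mul_assoc]
      have h2 : y g = z ((k * k')⁻¹ * g) := yA _ hkk' g he2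
      rw [h1, h2, mul_inv_rev, mul_assoc]
    · push_neg at hc
      have h1 : y (k⁻¹ * g) = x₀ (k⁻¹ * g) := yB _ fun k'' hk'' => hc k'' hk''
      have h2 : y g = x₀ g := by
        refine yB g fun k'' hk'' he => ?_
        have : (k⁻¹ * k'')⁻¹ * (k⁻¹ * g) ∈ E := by
          rwa [mul_inv_rev, inv_inv, mul_assoc, ← mul_assoc k, mul_inv_cancel, one_mul]
        exact hc (k⁻¹ * k'') (Kf.mul_mem (Kf.inv_mem hk) hk'') this
      rw [h1, h2, hx₀inv k hk g]
  -- y ∈ X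
  have hzP : ∀ g : G, (fun w : {g : G // g ∈ W} => shift g z w.1) ∈ P := by
    rw [hP] at hzX; exact hzX
  have hyX : y ∈ X := by
    rw [hP]
    intro g
    -- find k
    have hkey : ∃ k ∈ Kf, ∀ w ∈ W, y (g⁻¹ * w) = z (k⁻¹ * (g⁻¹ * w)) := by
      by_cases hc : ∃ k, k ∈ Kf ∧ ∃ w ∈ W, k⁻¹ * (g⁻¹ * w) ∈ E
      · obtain ⟨k, hk, w, hw, he⟩ := hc
        refine ⟨k, hk, fun w' hw' => ?_⟩
        refine yz k hk _ fun k' hk' hne he' => ?_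
        have h1 : k⁻¹ * k' ∈ Kf := Kf.mul_mem (Kf.inv_mem hk) hk'
        have h2 : k⁻¹ * k' ≠ 1 := by
          intro h
          rw [inv_mul_eq_one] at h
          exact hne h.symm
        refine hsep _ h1 h2 ?_
        have heq : k⁻¹ * k' = ((k⁻¹ * (g⁻¹ * w)) * w⁻¹) * ((k'⁻¹ * (g⁻¹ * w')) * w'⁻¹)⁻¹ := by
          group
        rw [heq]
        exact Finset.mul_mem_mul (hEWB _ he _ hw) (Finset.inv_mem_inv (hEWB _ he' _ hw'))
      · push_neg at hc
        refine ⟨1, Kf.one_mem, fun w hw => ?_⟩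
        refine yz 1 Kf.one_mem _ fun k' hk' hne he' => ?_
        exact hc k' hk' w hw he'
    obtain ⟨k, hk, hkk⟩ := hkey
    have : (fun w : {g : G // g ∈ W} => shift g y w.1) =
        (fun w : {g : G // g ∈ W} => shift (g * k) z w.1) := by
      funext w
      show y (g⁻¹ * w.1) = z ((g * k)⁻¹ * w.1)
      rw [hkk w.1 w.2, mul_inv_rev, mul_assoc]
    rw [this]
    exact hzP (g * k)
  exact ⟨y, hyX, periodic_of_invariant Kf hKffi hinv, hagree⟩

/-- If `G` is residually finite, `A` a finite set and `X ⊆ A^G` a strongly irreducible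
subshift of finite type containing a periodic configuration, then the periodic
configurations of `X` are dense in `X`. -/
theorem density_of_periodic_configurations
    {G A : Type*} [Group G] [Finite A] [TopologicalSpace A] [DiscreteTopology A]
    (hG : ResiduallyFinite G) (X : Set (G → A))
    (hX : IsSubshift X) (hft : IsOfFiniteType X) (hsi : IsStronglyIrreducible X)
    (hper : ∃ x ∈ X, IsPeriodicConfig x) :
    X ⊆ closure {x ∈ X | IsPeriodicConfig x} := by
  intro x hx
  rw [mem_closure_iff_nhds]
  intro t ht
  rw [nhds_pi, Filter.mem_pi] at ht
  obtain ⟨I, hIfin, t', ht', hsub⟩ := ht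
  obtain ⟨y, hyX, hyper, hyagree⟩ :=
    exists_periodic_agree hG X hX hft hsi hper x hx hIfin.toFinset
  refine ⟨y, hsub fun i hi => ?_, hyX, hyper⟩
  have h1 : t' i ∈ (pure (x i) : Filter A) := by
    have := ht' i
    rwa [nhds_discrete A] at this
  have h2 : y i = x i := hyagree i (hIfin.mem_toFinset.2 hi)
  rw [h2]
  exact h1
end

section
/- Let A be a finite set and let X ⊆ A^ℤ be a strongly irreducible subshift. Then the set of periodic configurations in X is dense in X. -/
/-- The shift action of `ℤ` on configurations `x : ℤ → A`: `(n • x)(m) = x(m - n)`. -/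
def shiftZ {A : Type*} (n : ℤ) (x : ℤ → A) : ℤ → A :=
  fun m => x (m - n)

/-- A subshift is a closed, shift-invariant subset of `A^ℤ` (with the prodiscrete
topology). -/
def IsSubshiftZ {A : Type*} [TopologicalSpace A] (X : Set (ℤ → A)) : Prop :=
  IsClosed X ∧ ∀ (n : ℤ) (x : ℤ → A), x ∈ X → shiftZ n x ∈ X

/-- A configuration is periodic if its orbit under the shift action is finite. -/
def IsPeriodicZ {A : Type*} (x : ℤ → A) : Prop :=
  (Set.range fun n : ℤ => shiftZ n x).Finite

/-- A subshift `X ⊆ A^ℤ` is strongly irreducible if there is a finite `Δ ⊆ ℤ` such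
that whenever `Ω₁, Ω₂` are finite subsets of `ℤ` with `(Ω₁ - Δ) ∩ Ω₂ = ∅`, any two
configurations of `X` can be glued along `Ω₁` and `Ω₂` inside `X`. -/
def IsStronglyIrreducibleZ {A : Type*} (X : Set (ℤ → A)) : Prop :=
  ∃ Δ : Finset ℤ, ∀ Ω₁ Ω₂ : Finset ℤ,
    (∀ a ∈ Ω₁, ∀ d ∈ Δ, a - d ∉ Ω₂) →
    ∀ x₁ ∈ X, ∀ x₂ ∈ X, ∃ x ∈ X,
      (∀ i ∈ Ω₁, x i = x₁ i) ∧ (∀ i ∈ Ω₂, x i = x₂ i)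

/-- The word `w` appears as a subword of the configuration `x : ℤ → A`. -/
def AppearsIn {A : Type*} (w : List A) (x : ℤ → A) : Prop :=
  ∃ i : ℤ, ∀ k : Fin w.length, x (i + (k.1 : ℤ)) = w.get k

/-- The language of `X ⊆ A^ℤ`: all finite words appearing in configurations of `X`. -/
def lang {A : Type*} (X : Set (ℤ → A)) : Set (List A) :=
  {w : List A | ∃ x ∈ X, AppearsIn w x}

section Aux
variable {A : Type*}

theorem shiftZ_apply (a : ℤ) (x : ℤ → A) (m : ℤ) : shiftZ a x m = x (m - a) := rfl

theorem shiftZ_comp (a b : ℤ) (x : ℤ → A) : shiftZ a (shiftZ b x) = shiftZ (a + b) x := by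
  funext m; simp [shiftZ, sub_sub]

theorem shiftZ_zero' (x : ℤ → A) : shiftZ 0 x = x := by
  funext m; simp [shiftZ]

theorem isPeriodicZ_of_shiftZ_eq {y : ℤ → A} {P : ℤ} (hP : 0 < P) (h : shiftZ P y = y) :
    IsPeriodicZ y := by
  have hmul : ∀ q : ℤ, shiftZ (P * q) y = y := by
    intro q
    induction q using Int.induction_on with
    | zero => simpa using shiftZ_zero' y
    | succ k ih =>
        have : P * (k + 1) = P + P * k := by ring
        rw [this, ← shiftZ_comp, ih, h]
    | pred k ih =>
        have hneg : shiftZ (-P) y = y := by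
          have := congrArg (shiftZ (-P)) h
          rw [shiftZ_comp, neg_add_cancel, shiftZ_zero'] at this
          exact this.symm
        have : P * (-(k:ℤ) - 1) = -P + P * (-(k:ℤ)) := by ring
        rw [this, ← shiftZ_comp, ih, hneg]
  have key : ∀ n : ℤ, shiftZ n y = shiftZ (n % P) y := by
    intro n
    conv_lhs => rw [← Int.emod_add_mul_ediv n P]
    rw [← shiftZ_comp, hmul]
  apply Set.Finite.subset (Set.finite_range fun r : Fin P.toNat => shiftZ (r : ℤ) y)
  rintro - ⟨n, rfl⟩
  have h0 : 0 ≤ n % P := Int.emod_nonneg n hP.ne'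
  have h1 : n % P < P := Int.emod_lt_of_pos n hP
  refine ⟨⟨(n % P).toNat, ?_⟩, ?_⟩
  · omega
  · show shiftZ ((⟨(n % P).toNat, by omega⟩ : Fin P.toNat) : ℤ) y = shiftZ n y
    rw [key n, Fin.val_mk, Int.toNat_of_nonneg h0]

end Aux

section Machine
attribute [local instance] Classical.propDecidable
variable {A : Type*}

/-- `g` is a possible gluing filler for the word `z|[0,ℓ)` glued to itself at gap `Dn`. -/
def Good (X : Set (ℤ → A)) (Dn : ℕ) (z : ℤ → A) (ℓ : ℤ) (g : Fin Dn → A) : Prop :=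
  ∃ w, w ∈ X ∧ (∀ j : ℤ, 0 ≤ j → j < ℓ → w j = z j) ∧
    (∀ k : Fin Dn, w (ℓ + (k : ℤ)) = g k) ∧
    (∀ j : ℤ, 0 ≤ j → j < ℓ → w (ℓ + (Dn : ℤ) + j) = z j)

noncomputable def pickG {F : Type*} [Nonempty F] (S : Set F) : F :=
  if h : S.Nonempty then h.some else Classical.arbitrary F

theorem pickG_mem {F : Type*} [Nonempty F] {S : Set F} (h : S.Nonempty) : pickG S ∈ S := by
  rw [pickG, dif_pos h]; exact h.some_mem

noncomputable def stepc (X : Set (ℤ → A)) (Dn : ℕ) [Nonempty A] :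
    (ℤ → A) × ℤ → (ℤ → A) × ℤ :=
  fun p =>
    if h : Good X Dn p.1 p.2 (pickG {g | Good X Dn p.1 p.2 g}) then
      (Exists.choose h, 2 * p.2 + (Dn : ℤ))
    else p

theorem good_nonempty {X : Set (ℤ → A)} {Δ : Finset ℤ}
    (hshift : ∀ (n : ℤ) (x : ℤ → A), x ∈ X → shiftZ n x ∈ X)
    (hglue : ∀ Ω₁ Ω₂ : Finset ℤ, (∀ a ∈ Ω₁, ∀ d ∈ Δ, a - d ∉ Ω₂) →
      ∀ x₁ ∈ X, ∀ x₂ ∈ X, ∃ x ∈ X, (∀ i ∈ Ω₁, x i = x₁ i) ∧ (∀ i ∈ Ω₂, x i = x₂ i))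
    {Dn : ℕ} (hDn : ∀ d ∈ Δ, d.natAbs < Dn)
    {z : ℤ → A} (hz : z ∈ X) {ℓ : ℤ} (hℓ : 0 ≤ ℓ) :
    {g : Fin Dn → A | Good X Dn z ℓ g}.Nonempty := by
  obtain ⟨w, hwX, hw1, hw2⟩ := hglue (Finset.Ico 0 ℓ) (Finset.Ico (ℓ + Dn) (ℓ + Dn + ℓ))
    (by
      intro a ha d hd
      simp only [Finset.mem_Ico] at ha ⊢
      have := hDn d hd
      omega)
    z hz (shiftZ (ℓ + Dn) z) (hshift _ _ hz)
  refine ⟨fun k => w (ℓ + (k : ℤ)), w, hwX, ?_, fun k => rfl, ?_⟩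
  · intro j h0 h1
    exact hw1 j (by simp only [Finset.mem_Ico]; omega)
  · intro j h0 h1
    have := hw2 (ℓ + Dn + j) (by simp only [Finset.mem_Ico]; omega)
    rw [this, shiftZ_apply]
    congr 1
    ring

theorem good_mono {X : Set (ℤ → A)}
    (hshift : ∀ (n : ℤ) (x : ℤ → A), x ∈ X → shiftZ n x ∈ X)
    {Dn : ℕ} {z w : ℤ → A} {ℓ : ℤ}
    (h1 : ∀ j : ℤ, 0 ≤ j → j < ℓ → w j = z j)
    (h3 : ∀ j : ℤ, 0 ≤ j → j < ℓ → w (ℓ + (Dn : ℤ) + j) = z j)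
    {h : Fin Dn → A} (hh : Good X Dn w (2 * ℓ + Dn) h) : Good X Dn z ℓ h := by
  obtain ⟨w₂, hw₂X, c1, c2, c3⟩ := hh
  refine ⟨shiftZ (-(ℓ + Dn)) w₂, hshift _ _ hw₂X, ?_, ?_, ?_⟩
  · intro j h0 hj
    rw [shiftZ_apply]
    have e : j - -(ℓ + (Dn : ℤ)) = ℓ + Dn + j := by ring
    rw [e, c1 (ℓ + Dn + j) (by omega) (by omega)]
    exact h3 j h0 hj
  · intro k
    rw [shiftZ_apply]
    have e : ℓ + (k : ℤ) - -(ℓ + (Dn : ℤ)) = (2 * ℓ + (Dn : ℤ)) + (k : ℤ) := by ring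
    rw [e]
    exact c2 k
  · intro j h0 hj
    rw [shiftZ_apply]
    have e : ℓ + (Dn : ℤ) + j - -(ℓ + (Dn : ℤ)) = (2 * ℓ + (Dn : ℤ)) + (Dn : ℤ) + j := by ring
    rw [e, c3 j (by omega) (by omega)]
    exact h1 j h0 hj

theorem stepc_spec {X : Set (ℤ → A)} {Δ : Finset ℤ} [Nonempty A]
    (hshift : ∀ (n : ℤ) (x : ℤ → A), x ∈ X → shiftZ n x ∈ X)
    (hglue : ∀ Ω₁ Ω₂ : Finset ℤ, (∀ a ∈ Ω₁, ∀ d ∈ Δ, a - d ∉ Ω₂) →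
      ∀ x₁ ∈ X, ∀ x₂ ∈ X, ∃ x ∈ X, (∀ i ∈ Ω₁, x i = x₁ i) ∧ (∀ i ∈ Ω₂, x i = x₂ i))
    {Dn : ℕ} (hDn : ∀ d ∈ Δ, d.natAbs < Dn)
    (p : (ℤ → A) × ℤ) (hp1 : p.1 ∈ X) (hp2 : 0 ≤ p.2) :
    (stepc X Dn p).2 = 2 * p.2 + (Dn : ℤ) ∧ (stepc X Dn p).1 ∈ X ∧
    (∀ j : ℤ, 0 ≤ j → j < p.2 → (stepc X Dn p).1 j = p.1 j) ∧
    (∀ k : Fin Dn, (stepc X Dn p).1 (p.2 + (k : ℤ)) = pickG {g | Good X Dn p.1 p.2 g} k) ∧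
    (∀ j : ℤ, 0 ≤ j → j < p.2 → (stepc X Dn p).1 (p.2 + (Dn : ℤ) + j) = p.1 j) := by
  have hne : {g : Fin Dn → A | Good X Dn p.1 p.2 g}.Nonempty :=
    good_nonempty hshift hglue hDn hp1 hp2
  have hg : Good X Dn p.1 p.2 (pickG {g | Good X Dn p.1 p.2 g}) := pickG_mem hne
  obtain ⟨hwX, c1, c2, c3⟩ := Exists.choose_spec hg
  simp only [stepc, dif_pos hg]
  exact ⟨trivial, hwX, c1, c2, c3⟩

theorem eventually_const_of_antitone {F : Type*} [Finite F] (S : ℕ → Set F)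
    (hS : ∀ n, S (n + 1) ⊆ S n) : ∃ N, ∀ n, N ≤ n → S n = S N := by
  classical
  have hmono : ∀ m n, m ≤ n → S n ⊆ S m := by
    intro m n h
    induction n, h using Nat.le_induction with
    | base => exact subset_rfl
    | succ n hmn ih => exact (hS n).trans ih
  let c : ℕ → ℕ := fun n => (Set.toFinite (S n)).toFinset.card
  have hrne : (Set.range c).Nonempty := ⟨c 0, 0, rfl⟩
  obtain ⟨N, hN⟩ : ∃ N, c N = sInf (Set.range c) := Nat.sInf_mem hrne
  refine ⟨N, fun n hn => ?_⟩
  have h1 : S n ⊆ S N := hmono N n hn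
  have h2 : c N ≤ c n := hN ▸ Nat.sInf_le ⟨n, rfl⟩
  have h3 : (Set.toFinite (S n)).toFinset = (Set.toFinite (S N)).toFinset :=
    Finset.eq_of_subset_of_card_le (Set.Finite.toFinset_subset_toFinset.2 h1) h2
  rwa [Set.Finite.toFinset_inj] at h3

end Machine

/-- If `A` is a finite set and `X ⊆ A^ℤ` is a strongly irreducible subshift, then the
periodic configurations of `X` are dense in `X`. -/
theorem dense_periodic_of_strongly_irreducible
    {A : Type*} [Finite A] [TopologicalSpace A] [DiscreteTopology A]
    (X : Set (ℤ → A)) (hX : IsSubshiftZ X) (hsi : IsStronglyIrreducibleZ X) :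
    X ⊆ closure {x ∈ X | IsPeriodicZ x} := by
  obtain ⟨hclosed, hshift⟩ := hX
  obtain ⟨Δ, hglue⟩ := hsi
  intro x hx
  haveI : Nonempty A := ⟨x 0⟩
  set Dn : ℕ := (Δ.sup fun d => d.natAbs) + 1 with hDndef
  have hDn : ∀ d ∈ Δ, d.natAbs < Dn := fun d hd => Nat.lt_succ_of_le (Finset.le_sup hd)
  have hDn0 : 0 < Dn := Nat.succ_pos _
  rw [mem_closure_iff]
  intro U hU hxU
  obtain ⟨I, u, hIu, hsub⟩ := isOpen_pi_iff.1 hU x hxU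
  set N0 : ℕ := I.sup fun i => i.natAbs with hN0def
  have hIN : ∀ i ∈ I, -(N0 : ℤ) ≤ i ∧ i ≤ (N0 : ℤ) := by
    intro i hi
    have : i.natAbs ≤ N0 := Finset.le_sup (f := fun i : ℤ => i.natAbs) hi
    omega
  -- the chain of self-gluings
  set p0 : (ℤ → A) × ℤ := (shiftZ (N0 : ℤ) x, 2 * (N0 : ℤ) + 1) with hp0def
  set ch : ℕ → (ℤ → A) × ℤ := fun n => (stepc X Dn)^[n] p0 with hchdef
  have hch0 : ch 0 = p0 := rfl
  have hchS : ∀ n, ch (n + 1) = stepc X Dn (ch n) := by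
    intro n
    simp only [hchdef, Function.iterate_succ_apply']
  have hbase : ∀ n, (ch n).1 ∈ X ∧ 1 ≤ (ch n).2 := by
    intro n
    induction n with
    | zero =>
        refine ⟨hshift _ _ hx, ?_⟩
        rw [hch0]
        show (1:ℤ) ≤ 2 * (N0 : ℤ) + 1
        omega
    | succ n ih =>
        have hs := stepc_spec hshift hglue hDn (ch n) ih.1 (by omega)
        rw [hchS n]
        exact ⟨hs.2.1, by rw [hs.1]; omega⟩
  have hspec : ∀ n, (ch (n + 1)).2 = 2 * (ch n).2 + (Dn : ℤ) ∧
      (∀ j : ℤ, 0 ≤ j → j < (ch n).2 → (ch (n + 1)).1 j = (ch n).1 j) ∧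
      (∀ k : Fin Dn, (ch (n + 1)).1 ((ch n).2 + (k : ℤ)) =
        pickG {g | Good X Dn (ch n).1 (ch n).2 g} k) ∧
      (∀ j : ℤ, 0 ≤ j → j < (ch n).2 →
        (ch (n + 1)).1 ((ch n).2 + (Dn : ℤ) + j) = (ch n).1 j) := by
    intro n
    have hs := stepc_spec hshift hglue hDn (ch n) (hbase n).1 (by have := (hbase n).2; omega)
    rw [hchS n]
    exact ⟨hs.1, hs.2.2.1, hs.2.2.2.1, hs.2.2.2.2⟩
  -- stabilization of the filler sets
  have hanti : ∀ n, {g : Fin Dn → A | Good X Dn (ch (n + 1)).1 (ch (n + 1)).2 g} ⊆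
      {g : Fin Dn → A | Good X Dn (ch n).1 (ch n).2 g} := by
    intro n h hh
    simp only [Set.mem_setOf_eq] at hh ⊢
    rw [(hspec n).1] at hh
    exact good_mono hshift (hspec n).2.1 (hspec n).2.2.2 hh
  obtain ⟨N, hNconst⟩ := eventually_const_of_antitone
    (fun n => {g : Fin Dn → A | Good X Dn (ch n).1 (ch n).2 g}) hanti
  set g : Fin Dn → A := pickG {g : Fin Dn → A | Good X Dn (ch N).1 (ch N).2 g} with hgdef
  have hpick : ∀ n, N ≤ n →
      pickG {g : Fin Dn → A | Good X Dn (ch n).1 (ch n).2 g} = g :=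
    fun n hn => congrArg pickG (hNconst n hn)
  -- the candidate periodic configuration
  set Z : ℤ → A := (ch N).1 with hZdef
  set L0 : ℤ := (ch N).2 with hL0def
  have hL0 : 1 ≤ L0 := (hbase N).2
  set P : ℤ := L0 + (Dn : ℤ) with hPdef
  have hP : 0 < P := by omega
  set fill : ℤ → A := fun r => g ⟨r.toNat % Dn, Nat.mod_lt _ hDn0⟩ with hfilldef
  set cw : ℤ → A := fun r => if r < L0 then Z r else fill (r - L0) with hcwdef
  set y : ℤ → A := fun m => cw (m % P) with hydef
  have hyper : ∀ a b : ℤ, a % P = b % P → y a = y b := by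
    intro a b hab
    simp only [hydef, hab]
  have hper : shiftZ P y = y := by
    funext m
    rw [shiftZ_apply]
    exact hyper _ _ (Int.sub_emod_right m P)
  -- lengths grow without bound
  have hgrow : ∀ k : ℕ, (k : ℤ) + 1 ≤ (ch k).2 := by
    intro k
    induction k with
    | zero => exact (hbase 0).2
    | succ k ih =>
        have := (hspec k).1
        push_cast
        omega
  -- the chain agrees with y
  have hagree : ∀ k : ℕ, (∃ t : ℤ, (ch (N + k)).2 = L0 + P * t) ∧
      ∀ j : ℤ, 0 ≤ j → j < (ch (N + k)).2 → (ch (N + k)).1 j = y j := by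
    intro k
    induction k with
    | zero =>
        constructor
        · exact ⟨0, by rw [Nat.add_zero, hL0def]; ring⟩
        · intro j h0 hj
          rw [Nat.add_zero] at hj ⊢
          rw [← hL0def] at hj
          have hjP : j % P = j := Int.emod_eq_of_lt h0 (by omega)
          simp only [hydef, hcwdef, hjP]
          rw [if_pos (by omega : j < L0)]
    | succ k ih =>
        obtain ⟨⟨t, ht⟩, hagr⟩ := ih
        have hL : 1 ≤ (ch (N + k)).2 := (hbase (N + k)).2
        have hlen : (ch (N + k + 1)).2 = 2 * (ch (N + k)).2 + (Dn : ℤ) := (hspec (N + k)).1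
        constructor
        · refine ⟨2 * t + 1, ?_⟩
          rw [show N + (k + 1) = N + k + 1 from rfl, hlen, ht, hPdef]
          ring
        · intro j h0 hj
          rw [show N + (k + 1) = N + k + 1 from rfl] at hj ⊢
          rw [hlen] at hj
          rcases lt_or_ge j (ch (N + k)).2 with hcase | hcase
          · rw [(hspec (N + k)).2.1 j h0 hcase]
            exact hagr j h0 hcase
          · rcases lt_or_ge j ((ch (N + k)).2 + (Dn : ℤ)) with hcase2 | hcase2
            · -- the filler zone
              set r : ℤ := j - (ch (N + k)).2 with hrdef
              have hr0 : 0 ≤ r := by omega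
              have hrD : r < (Dn : ℤ) := by omega
              have hc2 := (hspec (N + k)).2.2.1 ⟨r.toNat, by omega⟩
              rw [hpick (N + k) (Nat.le_add_right N k)] at hc2
              have hidx : (ch (N + k)).2 + ((⟨r.toNat, by omega⟩ : Fin Dn) : ℤ) = j := by
                simp only [Fin.val_mk]
                omega
              rw [hidx] at hc2
              rw [hc2]
              -- now compute y j
              have hjmod : j % P = L0 + r := by
                have : j = (L0 + r) + P * t := by omega
                rw [this, Int.add_mul_emod_self_left,
                  Int.emod_eq_of_lt (by omega) (by omega)]
              have hnl : ¬ (L0 + r < L0) := by omega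
              simp only [hydef, hcwdef, hjmod, if_neg hnl, hfilldef]
              congr 1
              apply Fin.ext
              show r.toNat = (L0 + r - L0).toNat % Dn
              rw [show L0 + r - L0 = r from by ring,
                Nat.mod_eq_of_lt (by omega : r.toNat < Dn)]
            · -- the second copy zone
              set j' : ℤ := j - ((ch (N + k)).2 + (Dn : ℤ)) with hj'def
              have hj'0 : 0 ≤ j' := by omega
              have hj'L : j' < (ch (N + k)).2 := by omega
              have hc3 := (hspec (N + k)).2.2.2 j' hj'0 hj'L
              have hidx : (ch (N + k)).2 + (Dn : ℤ) + j' = j := by omega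
              rw [hidx] at hc3
              rw [hc3, hagr j' hj'0 hj'L]
              apply hyper
              have : j' = j + P * (-(t + 1)) := by
                rw [hj'def, ht, hPdef]
                ring
              rw [this, Int.add_mul_emod_self_left]
  -- y belongs to X
  have hyX : y ∈ X := by
    have hycl : y ∈ closure X := by
      rw [mem_closure_iff]
      intro V hV hyV
      obtain ⟨J, v, hJv, hJsub⟩ := isOpen_pi_iff.1 hV y hyV
      set M : ℕ := J.sup fun i => i.natAbs with hMdef
      have hJM : ∀ i ∈ J, -(M : ℤ) ≤ i ∧ i ≤ (M : ℤ) := by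
        intro i hi
        have : i.natAbs ≤ M := Finset.le_sup (f := fun i : ℤ => i.natAbs) hi
        omega
      set T : ℤ := P * (M : ℤ) with hTdef
      have hTM : (M : ℤ) ≤ T := by nlinarith [hP]
      set k : ℕ := (T + (M : ℤ)).toNat with hkdef
      have hkT : T + (M : ℤ) ≤ (k : ℤ) := by
        rw [hkdef]
        omega
      have hlenk : T + (M : ℤ) < (ch (N + k)).2 := by
        have := hgrow (N + k)
        push_cast at this
        omega
      refine ⟨shiftZ (-T) (ch (N + k)).1, hJsub ?_, hshift _ _ (hbase (N + k)).1⟩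
      intro i hi
      have hiM := hJM i hi
      have : shiftZ (-T) (ch (N + k)).1 i = y i := by
        rw [shiftZ_apply, sub_neg_eq_add]
        rw [(hagree k).2 (i + T) (by omega) (by omega)]
        apply hyper
        have : i + T = i + P * (M : ℤ) := by rw [hTdef]
        rw [this, Int.add_mul_emod_self_left]
      rw [this]
      exact (hJv i hi).2
    rwa [hclosed.closure_eq] at hycl
  -- the final periodic configuration
  set y' : ℤ → A := shiftZ (-(N0 : ℤ)) y with hy'def
  have hy'X : y' ∈ X := hshift _ _ hyX
  have hy'per : IsPeriodicZ y' := by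
    apply isPeriodicZ_of_shiftZ_eq hP
    rw [hy'def, shiftZ_comp, add_comm, ← shiftZ_comp, hper]
  -- y' agrees with x on [-N0, N0]
  have hlenmono : ∀ n : ℕ, p0.2 ≤ (ch n).2 := by
    intro n
    induction n with
    | zero => rw [hch0]
    | succ n ih =>
        have h1 := (hspec n).1
        have hb := (hbase n).2
        omega
  have hprefix : ∀ n : ℕ, ∀ j : ℤ, 0 ≤ j → j < p0.2 → (ch n).1 j = p0.1 j := by
    intro n
    induction n with
    | zero => intro j _ _; rw [hch0]
    | succ n ih =>
        intro j h0 hj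
        have hlm := hlenmono n
        rw [(hspec n).2.1 j h0 (by omega)]
        exact ih j h0 hj
  have hy'x : ∀ i : ℤ, -(N0 : ℤ) ≤ i → i ≤ (N0 : ℤ) → y' i = x i := by
    intro i hi1 hi2
    rw [hy'def, shiftZ_apply, sub_neg_eq_add]
    have h1 : 0 ≤ i + (N0 : ℤ) := by omega
    have h2 : i + (N0 : ℤ) < p0.2 := by
      have : p0.2 = 2 * (N0 : ℤ) + 1 := rfl
      omega
    have h3 : i + (N0 : ℤ) < L0 := by
      have hlm : p0.2 ≤ L0 := by
        rw [hL0def]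
        exact hlenmono N
      omega
    have h4 := (hagree 0).2 (i + (N0 : ℤ)) h1 (by rw [Nat.add_zero]; omega)
    rw [Nat.add_zero] at h4
    rw [← h4, hprefix N (i + (N0 : ℤ)) h1 h2]
    have : p0.1 = shiftZ (N0 : ℤ) x := rfl
    rw [this, shiftZ_apply]
    congr 1
    ring
  refine ⟨y', hsub ?_, ⟨hy'X, hy'per⟩⟩
  intro i hi
  have := hIN i hi
  rw [hy'x i this.1 this.2]
  exact (hIu i hi).2
end

section
/- Let A be a finite set and let X ⊆ A^ℤ be a strongly irreducible subshift. Then X is surjunctive: every injective continuous shift-equivariant map τ : X → X is surjective. -/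
namespace SurjAux

def res {A : Type*} (a₀ : A) (Ω : Finset ℤ) (x : ℤ → A) : ℤ → A :=
  fun m => if m ∈ Ω then x m else a₀

lemma res_res {A : Type*} (a₀ : A) {Ω Ω' : Finset ℤ} (h : Ω ⊆ Ω') (x : ℤ → A) :
    res a₀ Ω (res a₀ Ω' x) = res a₀ Ω x := by
  funext m; simp only [res]
  by_cases hm : m ∈ Ω
  · simp [hm, h hm]
  · simp [hm]

lemma res_eq_of_agree {A : Type*} (a₀ : A) {Ω : Finset ℤ} {x y : ℤ → A}
    (h : ∀ m ∈ Ω, x m = y m) : res a₀ Ω x = res a₀ Ω y := by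
  funext m; simp only [res]
  by_cases hm : m ∈ Ω
  · simp [hm, h m hm]
  · simp [hm]

lemma res_apply_mem {A : Type*} (a₀ : A) {Ω : Finset ℤ} (x : ℤ → A) {m : ℤ}
    (hm : m ∈ Ω) : res a₀ Ω x m = x m := by simp [res, hm]

lemma res_apply_not_mem {A : Type*} (a₀ : A) {Ω : Finset ℤ} (x : ℤ → A) {m : ℤ}
    (hm : m ∉ Ω) : res a₀ Ω x m = a₀ := by simp [res, hm]

lemma res_image_finite {A : Type*} [Finite A] (a₀ : A) (Ω : Finset ℤ)
    (Z : Set (ℤ → A)) : ((res a₀ Ω) '' Z).Finite := by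
  have : Finite (↥Ω → A) := inferInstance
  apply Set.Finite.of_finite_image (f := fun f (i : ↥Ω) => f (i : ℤ))
  · exact Set.toFinite _
  · intro f hf g hg hfg
    obtain ⟨z, _, rfl⟩ := hf
    obtain ⟨z', _, rfl⟩ := hg
    funext m
    by_cases hm : m ∈ Ω
    · exact congrFun hfg ⟨m, hm⟩
    · simp [res, hm]

noncomputable def LW {A : Type*} [Finite A] (a₀ : A) (Ω : Finset ℤ)
    (Z : Set (ℤ → A)) : Finset (ℤ → A) :=
  (res_image_finite a₀ Ω Z).toFinset

lemma mem_LW {A : Type*} [Finite A] {a₀ : A} {Ω : Finset ℤ} {Z : Set (ℤ → A)}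
    {u : ℤ → A} : u ∈ LW a₀ Ω Z ↔ ∃ z ∈ Z, res a₀ Ω z = u := by
  simp [LW, Set.Finite.mem_toFinset, Set.mem_image]

lemma LW_card_le {A : Type*} [Finite A] (a₀ : A) (Ω : Finset ℤ) (Z : Set (ℤ → A)) :
    (LW a₀ Ω Z).card ≤ (Nat.card A) ^ Ω.card := by
  haveI : Fintype A := Fintype.ofFinite A
  classical
  rw [Nat.card_eq_fintype_card]
  have : (LW a₀ Ω Z).card ≤ (Finset.univ : Finset (↥Ω → A)).card := by
    apply Finset.card_le_card_of_injOn (fun f (i : ↥Ω) => f (i : ℤ))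
    · intro u _; exact Finset.mem_univ _
    · intro f hf g hg hfg
      rw [Finset.mem_coe, mem_LW] at hf hg
      obtain ⟨z, _, rfl⟩ := hf
      obtain ⟨z', _, rfl⟩ := hg
      funext m
      by_cases hm : m ∈ Ω
      · exact congrFun hfg ⟨m, hm⟩
      · simp [res, hm]
  simpa [Fintype.card_fun, Fintype.card_coe] using this

def bet (c g : ℕ) (j : ℕ) : ℤ := (j : ℤ) * (2*c+2*g+2) + c

lemma bet_mono (c g : ℕ) {i i' : ℕ} (h : i < i') :
    bet c g i + (2*(c:ℤ)+2*(g:ℤ)+2) ≤ bet c g i' := by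
  simp only [bet]
  have h1 : ((i:ℤ)+1) * (2*(c:ℤ)+2*g+2) ≤ (i':ℤ) * (2*(c:ℤ)+2*g+2) := by
    apply mul_le_mul_of_nonneg_right
    · exact_mod_cast h
    · positivity
  push_cast at h1 ⊢
  nlinarith [h1]

lemma c_le_bet (c g : ℕ) (j : ℕ) : (c : ℤ) ≤ bet c g j := by
  have := mul_nonneg (Int.natCast_nonneg j) (show (0:ℤ) ≤ 2*c+2*g+2 by positivity)
  simp only [bet]; linarith

lemma bet_sep (c g : ℕ) {j j' : ℕ} (h : j ≠ j') {a b : ℤ}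
    (ha : bet c g j - c ≤ a ∧ a ≤ bet c g j + c)
    (hb : bet c g j' - c ≤ b ∧ b ≤ bet c g j' + c) : g < (a - b).natAbs := by
  rcases h.lt_or_gt with h' | h'
  · have := bet_mono c g h'
    omega
  · have := bet_mono c g h'
    omega

lemma good_sep (c g : ℕ) {j : ℕ} {a b : ℤ}
    (ha : (c + g : ℕ) < (a - bet c g j).natAbs)
    (hb : bet c g j - c ≤ b ∧ b ≤ bet c g j + c) : g < (a - b).natAbs := by
  omega

lemma far_of_ne (c g : ℕ) {j j' : ℕ} (h : j ≠ j') {m : ℤ} (hm : m.natAbs ≤ c) :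
    (c + g : ℕ) < (bet c g j + m - bet c g j').natAbs := by
  rcases h.lt_or_gt with h' | h'
  · have := bet_mono c g h'; omega
  · have := bet_mono c g h'; omega

lemma blk_mem (c g k : ℕ) {j : ℕ} (hj : j < k) {m : ℤ} (hm : m.natAbs ≤ c) :
    bet c g j + m ∈ Finset.Icc (0:ℤ) (bet c g k - c - 1) := by
  have h1 := bet_mono c g hj
  have h2 := c_le_bet c g j
  rw [Finset.mem_Icc]; omega

lemma multiGlue {A : Type*} (X : Set (ℤ → A)) (x₀ : ℤ → A) (hx₀ : x₀ ∈ X)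
    (hXinv : ∀ n x, x ∈ X → shiftZ n x ∈ X) (c g : ℕ)
    (hglue : ∀ Ω₁ Ω₂ : Finset ℤ, (∀ a ∈ Ω₁, ∀ b ∈ Ω₂, g < (a - b).natAbs) →
      ∀ x₁ ∈ X, ∀ x₂ ∈ X, ∃ x ∈ X,
        (∀ i ∈ Ω₁, x i = x₁ i) ∧ (∀ i ∈ Ω₂, x i = x₂ i))
    (W : Finset ℤ) (S : Finset ℕ) :
    ∀ y ∈ X, ∃ x ∈ X,
      (∀ j ∈ S, ∀ m : ℤ, m.natAbs ≤ c → x (bet c g j + m) = x₀ m) ∧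
      (∀ a ∈ W, (∀ j ∈ S, (c + g : ℕ) < (a - bet c g j).natAbs) → x a = y a) := by
  classical
  induction S using Finset.induction_on with
  | empty => intro y hy; exact ⟨y, hy, by simp, by simp⟩
  | @insert j S hjS ih =>
    intro y hy
    obtain ⟨x', hx', hblk, hgood⟩ := ih y hy
    set B : Finset ℤ := Finset.Icc (bet c g j - c) (bet c g j + c) with hB
    set G : Finset ℤ := W.filter
      (fun a => ∀ j' ∈ insert j S, (c + g : ℕ) < (a - bet c g j').natAbs) with hG
    set Ω₁ : Finset ℤ := (S.biUnion fun j' => Finset.Icc (bet c g j' - c) (bet c g j' + c)) ∪ G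
      with hΩ₁
    have hsep : ∀ a ∈ Ω₁, ∀ b ∈ B, g < (a - b).natAbs := by
      intro a ha b hb
      rw [hΩ₁, Finset.mem_union] at ha
      rw [hB, Finset.mem_Icc] at hb
      rcases ha with ha | ha
      · obtain ⟨j', hj', ha⟩ := Finset.mem_biUnion.1 ha
        rw [Finset.mem_Icc] at ha
        have hne : j' ≠ j := fun h => hjS (h ▸ hj')
        exact bet_sep c g hne ha hb
      · rw [hG, Finset.mem_filter] at ha
        exact good_sep c g (ha.2 j (Finset.mem_insert_self _ _)) hb
    obtain ⟨x, hx, h1, h2⟩ := hglue Ω₁ B hsep x' hx'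
      (shiftZ (bet c g j) x₀) (hXinv _ _ hx₀)
    refine ⟨x, hx, ?_, ?_⟩
    · intro j' hj' m hm
      rcases Finset.mem_insert.1 hj' with rfl | hj'
      · have hmem : bet c g j' + m ∈ B := by
          rw [hB, Finset.mem_Icc]; omega
        rw [h2 _ hmem]
        simp [shiftZ]
      · have hmem : bet c g j' + m ∈ Ω₁ := by
          rw [hΩ₁, Finset.mem_union]
          left
          exact Finset.mem_biUnion.2 ⟨j', hj', by rw [Finset.mem_Icc]; omega⟩
        rw [h1 _ hmem]
        exact hblk j' hj' m hm
    · intro a ha hfar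
      have hmem : a ∈ Ω₁ := by
        rw [hΩ₁, Finset.mem_union]
        right
        rw [hG, Finset.mem_filter]
        exact ⟨ha, hfar⟩
      rw [h1 _ hmem]
      exact hgood a ha fun j' hj' => hfar j' (Finset.mem_insert_of_mem hj')

lemma main_counting {A : Type*} [Finite A] (X Y : Set (ℤ → A))
    (hYX : Y ⊆ X)
    (hXinv : ∀ n x, x ∈ X → shiftZ n x ∈ X)
    (x₀ : ℤ → A) (hx₀ : x₀ ∈ X)
    (τ : (ℤ → A) → (ℤ → A)) (hτY : ∀ x ∈ X, τ x ∈ Y)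
    (c g s : ℕ)
    (hW : ∀ y ∈ Y, ∀ i : ℤ, ∃ m : ℤ, m.natAbs ≤ c ∧ y (i + m) ≠ x₀ m)
    (hglue : ∀ Ω₁ Ω₂ : Finset ℤ, (∀ a ∈ Ω₁, ∀ b ∈ Ω₂, g < (a - b).natAbs) →
      ∀ x₁ ∈ X, ∀ x₂ ∈ X, ∃ x ∈ X,
        (∀ i ∈ Ω₁, x i = x₁ i) ∧ (∀ i ∈ Ω₂, x i = x₂ i))
    (hs : ∀ x ∈ X, ∀ x' ∈ X, ∀ i : ℤ,
      (∀ m : ℤ, (m - i).natAbs ≤ s → τ x m = τ x' m) → x i = x' i) :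
    False := by
  classical
  haveI : Nonempty A := ⟨x₀ 0⟩
  set a₀ : A := x₀ 0 with ha₀
  set CA : ℕ := Nat.card A with hCAdef
  have hCA : 1 ≤ CA := Nat.card_pos
  set T : ℕ := 2*c+2*g+1 with hT
  set D : ℕ := CA ^ T with hDdef
  have hD : 1 ≤ D := Nat.one_le_pow _ _ hCA
  -- choose k
  obtain ⟨k, hk⟩ : ∃ k : ℕ, CA ^ (2*s) * D ^ k < (D+1) ^ k := by
    have hDR : (0:ℝ) < (D:ℝ) := by exact_mod_cast hD
    have h1 : (1:ℝ) < ((D:ℝ)+1)/D := by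
      rw [lt_div_iff₀ hDR]; linarith
    obtain ⟨k, hk'⟩ := pow_unbounded_of_one_lt ((CA:ℝ) ^ (2*s)) h1
    refine ⟨k, ?_⟩
    have h2 : ((CA:ℝ) ^ (2*s)) * (D:ℝ)^k < (((D:ℝ)+1)/D)^k * (D:ℝ)^k :=
      mul_lt_mul_of_pos_right hk' (by positivity)
    rw [div_pow, div_mul_cancel₀] at h2
    · exact_mod_cast h2
    · positivity
  -- windows
  set In : Finset ℤ := Finset.Icc (0:ℤ) (bet c g k - c - 1) with hIn
  set In2 : Finset ℤ := Finset.Icc (-(s:ℤ)) (bet c g k - c - 1 + s) with hIn2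
  have hInsub : In ⊆ In2 := by
    rw [hIn, hIn2]
    apply Finset.Icc_subset_Icc <;> omega
  set NX : Finset (ℤ → A) := LW a₀ In X with hNX
  set MY : Finset (ℤ → A) := LW a₀ In Y with hMY
  set MY2 : Finset (ℤ → A) := LW a₀ In2 Y with hMY2
  -- Step A
  have stepA : NX.card ≤ MY2.card := by
    set f : (ℤ → A) → (ℤ → A) := fun u =>
      if h : ∃ z ∈ X, res a₀ In z = u then res a₀ In2 (τ h.choose) else u with hf
    apply Finset.card_le_card_of_injOn f
    · intro u hu
      rw [hNX, Finset.mem_coe, mem_LW] at hu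
      rw [hf]; dsimp only; rw [dif_pos hu, hMY2]
      exact mem_LW.2 ⟨τ hu.choose, hτY _ hu.choose_spec.1, rfl⟩
    · intro u hu u' hu' heq
      rw [Finset.mem_coe, hNX, mem_LW] at hu hu'
      rw [hf] at heq; dsimp only at heq
      rw [dif_pos hu, dif_pos hu'] at heq
      have hagree : ∀ m ∈ In2, τ hu.choose m = τ hu'.choose m := by
        intro m hm
        have h3 := congrFun heq m
        rwa [res_apply_mem a₀ _ hm, res_apply_mem a₀ _ hm] at h3
      have hzz : ∀ i ∈ In, hu.choose i = hu'.choose i := by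
        intro i hi
        apply hs _ hu.choose_spec.1 _ hu'.choose_spec.1 i
        intro m hm
        apply hagree
        rw [hIn, Finset.mem_Icc] at hi
        rw [hIn2, Finset.mem_Icc]
        omega
      rw [← hu.choose_spec.2, ← hu'.choose_spec.2]
      exact res_eq_of_agree a₀ hzz
  -- Step B
  have stepB : MY2.card ≤ MY.card * CA ^ (2*s) := by
    classical
    set Bd : Finset ℤ := In2 \ In with hBd
    set BW : Finset (ℤ → A) := LW a₀ Bd Set.univ with hBW
    have h1 : MY2.card ≤ (MY ×ˢ BW).card := by
      apply Finset.card_le_card_of_injOn (fun u => (res a₀ In u, res a₀ Bd u))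
      · intro u hu
        rw [hMY2, Finset.mem_coe, mem_LW] at hu
        obtain ⟨z, hz, rfl⟩ := hu
        have hBdsub : Bd ⊆ In2 := by rw [hBd]; exact Finset.sdiff_subset
        have e1 : res a₀ In (res a₀ In2 z) = res a₀ In z := res_res a₀ hInsub z
        have e2 : res a₀ Bd (res a₀ In2 z) = res a₀ Bd z := res_res a₀ hBdsub z
        rw [Finset.mem_coe, Finset.mem_product]
        dsimp only
        rw [e1, e2]
        constructor
        · rw [hMY]; exact mem_LW.2 ⟨z, hz, rfl⟩
        · rw [hBW]; exact mem_LW.2 ⟨z, Set.mem_univ z, rfl⟩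
      · intro u hu u' hu' heq
        rw [Finset.mem_coe, hMY2, mem_LW] at hu hu'
        obtain ⟨z, hz, rfl⟩ := hu
        obtain ⟨z', hz', rfl⟩ := hu'
        have h1 := congrArg Prod.fst heq
        have h2 := congrArg Prod.snd heq
        dsimp at h1 h2
        funext m
        by_cases hm : m ∈ In2
        · by_cases hmi : m ∈ In
          · have h3 := congrFun h1 m
            rwa [res_apply_mem a₀ _ hmi, res_apply_mem a₀ _ hmi] at h3
          · have hmb : m ∈ Bd := by rw [hBd, Finset.mem_sdiff]; exact ⟨hm, hmi⟩
            have h3 := congrFun h2 m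
            rwa [res_apply_mem a₀ _ hmb, res_apply_mem a₀ _ hmb] at h3
        · rw [res_apply_not_mem a₀ _ hm, res_apply_not_mem a₀ _ hm]
    rw [Finset.card_product] at h1
    refine h1.trans (Nat.mul_le_mul_left _ ?_)
    rw [hBW]
    refine (LW_card_le a₀ Bd Set.univ).trans ?_
    rw [← hCAdef]
    apply Nat.pow_le_pow_right hCA
    rw [hBd, Finset.card_sdiff_of_subset hInsub, hIn, hIn2, Int.card_Icc, Int.card_Icc]
    have := c_le_bet c g k
    omega
  -- Step C
  have stepC : MY.card * (D+1)^k ≤ NX.card * D^k := by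
    classical
    have hGl := multiGlue X x₀ hx₀ hXinv c g hglue In
    set Φ : Finset ℕ → (ℤ → A) → (ℤ → A) := fun S u =>
      if h : ∃ z ∈ Y, res a₀ In z = u then
        res a₀ In (hGl S h.choose (hYX h.choose_spec.1)).choose
      else u with hΦ
    have hprop : ∀ S : Finset ℕ, ∀ u ∈ MY, ∃ z x, z ∈ Y ∧ res a₀ In z = u ∧ x ∈ X ∧
        Φ S u = res a₀ In x ∧
        (∀ j ∈ S, ∀ m : ℤ, m.natAbs ≤ c → x (bet c g j + m) = x₀ m) ∧
        (∀ a ∈ In, (∀ j ∈ S, (c + g : ℕ) < (a - bet c g j).natAbs) → x a = z a) := by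
      intro S u hu
      rw [hMY, mem_LW] at hu
      obtain ⟨hxX, hblk, hgood⟩ := (hGl S hu.choose (hYX hu.choose_spec.1)).choose_spec
      refine ⟨hu.choose, _, hu.choose_spec.1, hu.choose_spec.2, hxX, ?_, hblk, hgood⟩
      rw [hΦ]; dsimp only; rw [dif_pos hu]
    have hrec : ∀ S ⊆ Finset.range k, ∀ u ∈ MY, ∀ j ∈ Finset.range k,
        ((∀ m : ℤ, m.natAbs ≤ c → Φ S u (bet c g j + m) = x₀ m) ↔ j ∈ S) := by
      intro S hS u hu j hj
      obtain ⟨z, x, hzY, hzu, hxX, hΦu, hblk, hgood⟩ := hprop S u hu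
      rw [Finset.mem_range] at hj
      constructor
      · intro hall
        by_contra hjS
        obtain ⟨m, hm, hne⟩ := hW z hzY (bet c g j)
        have e1 : Φ S u (bet c g j + m) = z (bet c g j + m) := by
          rw [hΦu, res_apply_mem a₀ _ (by rw [hIn]; exact blk_mem c g k hj hm)]
          apply hgood
          · rw [hIn]; exact blk_mem c g k hj hm
          · intro j' hj'S
            exact far_of_ne c g (fun hjj => hjS (by rw [hjj]; exact hj'S)) hm
        apply hne
        rw [← e1]
        exact hall m hm
      · intro hjS m hm
        rw [hΦu, res_apply_mem a₀ _ (by rw [hIn]; exact blk_mem c g k hj hm)]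
        exact hblk j hjS m hm
    have himg : ∀ S : Finset ℕ, ∀ u ∈ MY, Φ S u ∈ NX := by
      intro S u hu
      obtain ⟨z, x, _, _, hxX, hΦu, _, _⟩ := hprop S u hu
      rw [hΦu, hNX]; exact mem_LW.2 ⟨x, hxX, rfl⟩
    have hcard1 : ∀ S ⊆ Finset.range k,
        MY.card ≤ ((MY.image (Φ S)).card) * D ^ S.card := by
      intro S hS
      set ES : Finset ℤ :=
        S.biUnion (fun j => Finset.Icc (bet c g j - (c+g)) (bet c g j + (c+g))) with hES
      set EW : Finset (ℤ → A) := LW a₀ ES Set.univ with hEW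
      have h1 : MY.card ≤ ((MY.image (Φ S)) ×ˢ EW).card := by
        apply Finset.card_le_card_of_injOn (fun u => (Φ S u, res a₀ ES u))
        · intro u hu
          rw [Finset.mem_coe, Finset.mem_product]
          refine ⟨Finset.mem_image_of_mem _ hu, ?_⟩
          rw [hEW]; exact mem_LW.2 ⟨u, Set.mem_univ u, rfl⟩
        · intro u hu u' hu' heq
          rw [Finset.mem_coe] at hu hu'
          have h1 := congrArg Prod.fst heq
          have h2 := congrArg Prod.snd heq
          dsimp at h1 h2
          obtain ⟨z, x, hzY, hzu, hxX, hΦu, hblk, hgood⟩ := hprop S u hu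
          obtain ⟨z', x', hzY', hzu', hxX', hΦu', hblk', hgood'⟩ := hprop S u' hu'
          funext m
          by_cases hmI : m ∈ In
          · by_cases hmE : m ∈ ES
            · have h3 := congrFun h2 m
              rwa [res_apply_mem a₀ _ hmE, res_apply_mem a₀ _ hmE] at h3
            · have hfarm : ∀ j ∈ S, (c+g : ℕ) < (m - bet c g j).natAbs := by
                intro j hjS
                by_contra hcon
                apply hmE
                rw [hES]
                exact Finset.mem_biUnion.2 ⟨j, hjS, by rw [Finset.mem_Icc]; omega⟩
              have e1 : u m = x m := by
                rw [← hzu, res_apply_mem a₀ _ hmI]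
                exact (hgood m hmI hfarm).symm
              have e1' : u' m = x' m := by
                rw [← hzu', res_apply_mem a₀ _ hmI]
                exact (hgood' m hmI hfarm).symm
              rw [e1, e1']
              have h3 := congrFun h1 m
              rwa [hΦu, hΦu', res_apply_mem a₀ _ hmI, res_apply_mem a₀ _ hmI] at h3
          · rw [← hzu, ← hzu', res_apply_not_mem a₀ _ hmI, res_apply_not_mem a₀ _ hmI]
      rw [Finset.card_product] at h1
      refine h1.trans (Nat.mul_le_mul_left _ ?_)
      rw [hEW]
      refine (LW_card_le a₀ ES Set.univ).trans ?_
      rw [← hCAdef, hDdef, ← pow_mul]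
      apply Nat.pow_le_pow_right hCA
      rw [hES]
      refine (Finset.card_biUnion_le).trans ?_
      have hone : ∀ j ∈ S, (Finset.Icc (bet c g j - (c+g)) (bet c g j + (c+g))).card = T := by
        intro j _
        rw [Int.card_Icc, hT]
        omega
      rw [Finset.sum_congr rfl hone, Finset.sum_const, smul_eq_mul, Nat.mul_comm]
    have hdisj : ∀ S ∈ (Finset.range k).powerset, ∀ S' ∈ (Finset.range k).powerset,
        S ≠ S' → Disjoint (MY.image (Φ S)) (MY.image (Φ S')) := by
      intro S hS S' hS' hne
      rw [Finset.mem_powerset] at hS hS'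
      rw [Finset.disjoint_left]
      intro v hv hv'
      obtain ⟨u, hu, huv⟩ := Finset.mem_image.1 hv
      obtain ⟨u', hu', huv'⟩ := Finset.mem_image.1 hv'
      apply hne
      ext j
      constructor
      · intro hjS
        have hjr : j ∈ Finset.range k := hS hjS
        rw [← hrec S' hS' u' hu' j hjr]
        rw [huv', ← huv]
        exact (hrec S hS u hu j hjr).2 hjS
      · intro hjS'
        have hjr : j ∈ Finset.range k := hS' hjS'
        rw [← hrec S hS u hu j hjr]
        rw [huv, ← huv']
        exact (hrec S' hS' u' hu' j hjr).2 hjS'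
    have hsum1 : ∑ S ∈ (Finset.range k).powerset, ((MY.image (Φ S)).card) ≤ NX.card := by
      rw [← Finset.card_biUnion hdisj]
      apply Finset.card_le_card
      intro v hv
      obtain ⟨S, hS, hv⟩ := Finset.mem_biUnion.1 hv
      obtain ⟨u, hu, rfl⟩ := Finset.mem_image.1 hv
      exact himg S u hu
    have hid : ∑ S ∈ (Finset.range k).powerset, D ^ (k - S.card) = (D+1)^k := by
      have h1 : ((1:ℕ)+D)^k
          = ∑ S ∈ (Finset.range k).powerset,
              (∏ _i ∈ S, 1) * ∏ _i ∈ Finset.range k \ S, D := by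
        rw [← Finset.prod_add, Finset.prod_const, Finset.card_range]
      rw [add_comm]
      rw [h1]
      apply Finset.sum_congr rfl
      intro S hS
      rw [Finset.mem_powerset] at hS
      rw [Finset.prod_const_one, Finset.prod_const, one_mul,
        Finset.card_sdiff_of_subset hS, Finset.card_range]
    calc MY.card * (D+1)^k
        = ∑ S ∈ (Finset.range k).powerset, MY.card * D^(k - S.card) := by
          rw [← Finset.mul_sum, hid]
      _ ≤ ∑ S ∈ (Finset.range k).powerset, (MY.image (Φ S)).card * D^k := by
          apply Finset.sum_le_sum
          intro S hS
          rw [Finset.mem_powerset] at hS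
          have hSk : S.card ≤ k := by
            have := Finset.card_le_card hS
            rwa [Finset.card_range] at this
          calc MY.card * D^(k - S.card)
              ≤ ((MY.image (Φ S)).card * D^S.card) * D^(k-S.card) :=
                Nat.mul_le_mul_right _ (hcard1 S hS)
            _ = (MY.image (Φ S)).card * D^k := by
                rw [mul_assoc, ← pow_add, Nat.add_sub_cancel' hSk]
      _ = (∑ S ∈ (Finset.range k).powerset, (MY.image (Φ S)).card) * D^k := by
          rw [Finset.sum_mul]
      _ ≤ NX.card * D^k := Nat.mul_le_mul_right _ hsum1
  -- Step D
  have stepD : 0 < MY.card := by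
    rw [Finset.card_pos, hMY]
    exact ⟨res a₀ In (τ x₀), mem_LW.2 ⟨τ x₀, hτY _ hx₀, rfl⟩⟩
  have final : MY.card * (D+1)^k ≤ MY.card * (CA ^ (2*s) * D^k) := by
    calc MY.card * (D+1)^k ≤ NX.card * D^k := stepC
    _ ≤ MY2.card * D^k := Nat.mul_le_mul_right _ stepA
    _ ≤ (MY.card * CA ^ (2*s)) * D^k := Nat.mul_le_mul_right _ stepB
    _ = MY.card * (CA ^ (2*s) * D^k) := by ring
  have := Nat.le_of_mul_le_mul_left final stepD
  omega

end SurjAux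

open SurjAux in
/-- If `A` is a finite set and `X ⊆ A^ℤ` is a strongly irreducible subshift, then `X`
is surjunctive: every injective continuous shift-equivariant map `τ : X → X` is
surjective. -/
theorem strongly_irreducible_surjunctive_Z
    {A : Type*} [Finite A] [TopologicalSpace A] [DiscreteTopology A]
    (X : Set (ℤ → A)) (hX : IsSubshiftZ X) (hsi : IsStronglyIrreducibleZ X)
    (τ : (ℤ → A) → (ℤ → A)) (hmaps : Set.MapsTo τ X X) (hcont : ContinuousOn τ X)
    (hequiv : ∀ n : ℤ, ∀ x ∈ X, τ (shiftZ n x) = shiftZ n (τ x))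
    (hinj : Set.InjOn τ X) :
    X ⊆ τ '' X := by

  classical
  intro x₀ hx₀X
  by_contra hx₀
  set Y : Set (ℤ → A) := τ '' X with hY
  have hXcomp : IsCompact X := hX.1.isCompact
  have hYcomp : IsCompact Y := hXcomp.image_of_continuousOn hcont
  have hYclosed : IsClosed Y := hYcomp.isClosed
  have hYX : Y ⊆ X := by
    rintro y ⟨x, hx, rfl⟩; exact hmaps hx
  have hYinv : ∀ n y, y ∈ Y → shiftZ n y ∈ Y := by
    rintro n y ⟨x, hx, rfl⟩
    exact ⟨shiftZ n x, hX.2 n x hx, hequiv n x hx⟩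
  -- forbidden word radius c
  obtain ⟨c, hc⟩ : ∃ c : ℕ, ∀ y ∈ Y, ∃ m : ℤ, m.natAbs ≤ c ∧ y m ≠ x₀ m := by
    have hUopen : ∀ m : ℤ, IsOpen {z : ℤ → A | z m ≠ x₀ m} := by
      intro m
      have hcm : Continuous (fun z : ℤ → A => z m) := continuous_apply m
      exact IsOpen.preimage hcm (isOpen_discrete {a : A | a ≠ x₀ m})
    have hcover : Y ⊆ ⋃ m : ℤ, {z : ℤ → A | z m ≠ x₀ m} := by
      intro y hy
      by_contra hcon
      simp only [Set.mem_iUnion, Set.mem_setOf_eq, not_exists, not_not] at hcon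
      exact hx₀ (by rwa [show y = x₀ from funext hcon] at hy)
    obtain ⟨F, hF⟩ := hYcomp.elim_finite_subcover _ hUopen hcover
    refine ⟨F.sup Int.natAbs, ?_⟩
    intro y hy
    have := hF hy
    simp only [Set.mem_iUnion, Set.mem_setOf_eq] at this
    obtain ⟨m, hm, hne⟩ := this
    exact ⟨m, Finset.le_sup hm, hne⟩
  have hW : ∀ y ∈ Y, ∀ i : ℤ, ∃ m : ℤ, m.natAbs ≤ c ∧ y (i + m) ≠ x₀ m := by
    intro y hy i
    obtain ⟨m, hm, hne⟩ := hc (shiftZ (-i) y) (hYinv _ _ hy)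
    refine ⟨m, hm, ?_⟩
    simpa [shiftZ, sub_neg_eq_add, add_comm] using hne
  -- gluing constant g
  obtain ⟨Δ, hΔ⟩ := hsi
  set g : ℕ := Δ.sup Int.natAbs with hg
  have hglue : ∀ Ω₁ Ω₂ : Finset ℤ, (∀ a ∈ Ω₁, ∀ b ∈ Ω₂, g < (a - b).natAbs) →
      ∀ x₁ ∈ X, ∀ x₂ ∈ X, ∃ x ∈ X,
        (∀ i ∈ Ω₁, x i = x₁ i) ∧ (∀ i ∈ Ω₂, x i = x₂ i) := by
    intro Ω₁ Ω₂ hsep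
    apply hΔ
    intro a ha d hd hmem
    have h1 := hsep a ha _ hmem
    have h2 : d.natAbs ≤ g := Finset.le_sup hd
    omega
  -- injectivity radius s
  obtain ⟨s, hs⟩ : ∃ s : ℕ, ∀ x ∈ X, ∀ x' ∈ X,
      (∀ m : ℤ, m.natAbs ≤ s → τ x m = τ x' m) → x 0 = x' 0 := by
    by_contra hcon
    push_neg at hcon
    set K : ℕ → Set ((ℤ → A) × (ℤ → A)) := fun s =>
      ((X ×ˢ X) ∩ (fun p => (τ p.1, τ p.2)) ⁻¹'
        {q : (ℤ → A) × (ℤ → A) | ∀ m : ℤ, m.natAbs ≤ s → q.1 m = q.2 m}) ∩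
      {p : (ℤ → A) × (ℤ → A) | p.1 0 ≠ p.2 0} with hK
    have hτ2 : ContinuousOn (fun p : (ℤ → A) × (ℤ → A) => (τ p.1, τ p.2)) (X ×ˢ X) := by
      apply ContinuousOn.prodMk
      · exact hcont.comp continuousOn_fst (fun p hp => hp.1)
      · exact hcont.comp continuousOn_snd (fun p hp => hp.2)
    have hclosed : ∀ s, IsClosed (K s) := by
      intro s
      apply IsClosed.inter
      · apply ContinuousOn.preimage_isClosed_of_isClosed hτ2 (hX.1.prod hX.1)
        have : {q : (ℤ → A) × (ℤ → A) | ∀ m : ℤ, m.natAbs ≤ s → q.1 m = q.2 m} =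
            ⋂ m ∈ {m : ℤ | m.natAbs ≤ s}, {q : (ℤ → A) × (ℤ → A) | q.1 m = q.2 m} := by
          ext q; simp [Set.mem_iInter]
        rw [this]
        apply isClosed_biInter
        intro m _
        exact isClosed_eq ((continuous_apply m).comp continuous_fst)
          ((continuous_apply m).comp continuous_snd)
      · have : {p : (ℤ → A) × (ℤ → A) | p.1 0 ≠ p.2 0} =
            (fun p : (ℤ → A) × (ℤ → A) => (p.1 0, p.2 0)) ⁻¹'
              {q : A × A | q.1 ≠ q.2} := rfl
        rw [this]
        apply IsClosed.preimage
        · exact ((continuous_apply (0:ℤ)).comp continuous_fst).prodMk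
            ((continuous_apply (0:ℤ)).comp continuous_snd)
        · exact isClosed_discrete _
    have hcompact : ∀ s, IsCompact (K s) := fun s => (hclosed s).isCompact
    have hne : ∀ s, (K s).Nonempty := by
      intro s
      obtain ⟨x, hx, x', hx', hag, hne0⟩ := hcon s
      exact ⟨(x, x'), ⟨⟨⟨hx, hx'⟩, hag⟩, hne0⟩⟩
    have hdir : Directed (· ⊇ ·) K := by
      intro s s'
      refine ⟨max s s', ?_, ?_⟩
      · intro p hp
        exact ⟨⟨hp.1.1, fun m hm => hp.1.2 m (le_trans hm (le_max_left s s'))⟩, hp.2⟩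
      · intro p hp
        exact ⟨⟨hp.1.1, fun m hm => hp.1.2 m (le_trans hm (le_max_right s s'))⟩, hp.2⟩
    obtain ⟨p, hp⟩ := IsCompact.nonempty_iInter_of_directed_nonempty_isCompact_isClosed
      K hdir hne hcompact hclosed
    rw [Set.mem_iInter] at hp
    have hp0 := hp 0
    have hpX : p.1 ∈ X := hp0.1.1.1
    have hpX' : p.2 ∈ X := hp0.1.1.2
    have hττ : τ p.1 = τ p.2 := by
      funext m
      exact (hp m.natAbs).1.2 m le_rfl
    have := hinj hpX hpX' hττ
    exact hp0.2 (by rw [this])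
  -- extended injectivity radius
  have hs' : ∀ x ∈ X, ∀ x' ∈ X, ∀ i : ℤ,
      (∀ m : ℤ, (m - i).natAbs ≤ s → τ x m = τ x' m) → x i = x' i := by
    intro x hx x' hx' i hagree
    have h1 := hs (shiftZ (-i) x) (hX.2 _ _ hx) (shiftZ (-i) x') (hX.2 _ _ hx') ?_
    · simpa [shiftZ, sub_neg_eq_add] using h1
    · intro m hm
      rw [hequiv (-i) x hx, hequiv (-i) x' hx']
      simp only [shiftZ, sub_neg_eq_add]
      apply hagree
      omega
  exact main_counting X Y hYX (fun n x hx => hX.2 n x hx) x₀ hx₀X τ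
    (fun x hx => ⟨x, hx, rfl⟩) c g s hW hglue hs'
end
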